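/- Let F be a field equipped with a nonarchimedean absolute value |·|, let q ≥ 2 and d ≥ 1 be integers, let θ ∈ F with |θ| > 1, and let c_1,…,c_d ∈ F. Define e_0 = 1, e_j = 0 for j < 0, and e_n = (θ^{q^n} − θ)^{−1}·Σ_{l=1}^{d} c_l·e_{n−l}^{q^l} for n ≥ 1. Then there exist an integer n_0 ≥ 0 and a real number r with 0 < r < 1 such that |e_n| ≤ r^{n·q^n} for all n ≥ n_0. -/

import Mathlib

/-!
Growth of the exponential coefficients of a Drinfeld-type recursion.

Let `F` be a field with a nonarchimedean absolute value `|·|`, `q ≥ 2`, `d ≥ 1`,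
`θ ∈ F` with `|θ| > 1`, and `c_1, …, c_d ∈ F`.  Define `e_0 = 1`, `e_j = 0` for `j < 0`,
and `e_n = (θ^{q^n} - θ)⁻¹ ∑_{l=1}^{d} c_l e_{n-l}^{q^l}` for `n ≥ 1`.
Then there are `n_0 ≥ 0` and `0 < r < 1` with `|e_n| ≤ r^{n·q^n}` for all `n ≥ n_0`.
-/

noncomputable section

/-- The exponential coefficients `e_n` attached to `θ`, `q` and the coefficients
`c : ℕ → F` (only `c 1, …, c d` are used); the guard `1 ≤ l ∧ l ≤ n+1` encodes the
convention `e_j = 0` for `j < 0`. -/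
def eRec (F : Type) [Field F] (q d : ℕ) (θ : F) (c : ℕ → F) : ℕ → F
  | 0 => 1
  | (n + 1) =>
      (θ ^ q ^ (n + 1) - θ)⁻¹ *
        ∑ l ∈ Finset.Icc 1 d,
          if h : 1 ≤ l ∧ l ≤ n + 1 then c l * (eRec F q d θ c (n + 1 - l)) ^ q ^ l else 0
  decreasing_by omega

section Aux
variable {F : Type} [Field F] (abv : AbsoluteValue F ℝ)
  (nonarch : ∀ x y : F, abv (x + y) ≤ max (abv x) (abv y))

include nonarch in
lemma abv_sub_eq {x y : F} (h : abv y < abv x) : abv (x - y) = abv x := by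
  have h1 : abv (x - y) ≤ abv x := by
    have h2 := nonarch x (-y)
    rw [← sub_eq_add_neg, abv.map_neg] at h2
    exact h2.trans (max_le le_rfl h.le)
  have h2 : abv x ≤ abv (x - y) := by
    have h3 := nonarch (x - y) y
    rw [sub_add_cancel] at h3
    rcases max_cases (abv (x - y)) (abv y) with ⟨he, _⟩ | ⟨he, _⟩
    · rw [he] at h3; exact h3
    · rw [he] at h3; exact absurd h3 (not_le.mpr h)
  exact le_antisymm h1 h2

include nonarch in
lemma abv_sum_le {ι : Type*} {s : Finset ι} {f : ι → F} {B : ℝ} (hB : 0 ≤ B)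
    (h : ∀ i ∈ s, abv (f i) ≤ B) : abv (∑ i ∈ s, f i) ≤ B := by
  classical
  induction s using Finset.induction_on with
  | empty => simpa using hB
  | insert _ _ hx ih =>
    rw [Finset.sum_insert hx]
    exact (nonarch _ _).trans (max_le (h _ (Finset.mem_insert_self _ _))
      (ih fun i hi => h i (Finset.mem_insert_of_mem hi)))

end Aux

theorem abs_exp_coeff_le_geom
    (F : Type) [Field F] (abv : AbsoluteValue F ℝ)
    (nonarch : ∀ x y : F, abv (x + y) ≤ max (abv x) (abv y))
    (q d : ℕ) (hq : 2 ≤ q) (hd : 1 ≤ d)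
    (θ : F) (hθ : 1 < abv θ) (c : ℕ → F) :
    ∃ (n₀ : ℕ) (r : ℝ), 0 < r ∧ r < 1 ∧
      ∀ n, n₀ ≤ n → abv (eRec F q d θ c n) ≤ r ^ (n * q ^ n) := by
  classical
  set T := abv θ with hTdef
  have hT0 : 0 < T := lt_trans one_pos hθ
  have hq0 : 0 < q := by omega
  have hne : (Finset.Icc 1 d).Nonempty := ⟨1, by simp [hd]⟩
  set C : ℝ := (Finset.Icc 1 d).sup' hne (fun l => 1 ⊔ abv (c l)) with hCdef
  have h1mem : (1 : ℕ) ∈ Finset.Icc 1 d := by simp [hd]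
  have hC1 : 1 ≤ C := le_trans (le_max_left _ _) (Finset.le_sup' (fun l => 1 ⊔ abv (c l)) h1mem)
  have hC0 : (0:ℝ) ≤ C := le_trans zero_le_one hC1
  have hCl : ∀ l ∈ Finset.Icc 1 d, abv (c l) ≤ C :=
    fun l hl => le_trans (le_max_right _ _) (Finset.le_sup' (fun l => 1 ⊔ abv (c l)) hl)
  set a : ℕ → ℝ := fun n => abv (eRec F q d θ c n) with hadef
  have ha0 : ∀ n, 0 ≤ a n := fun n => abv.nonneg _
  -- the basic recursion estimate
  have step : ∀ n : ℕ, ∀ B : ℝ, 0 ≤ B →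
      (∀ l ∈ Finset.Icc 1 d, (a (n + 1 - l)) ^ (q ^ l) ≤ B) →
      a (n + 1) ≤ (T ^ q ^ (n+1))⁻¹ * (C * B) := by
    intro n B hB hw
    have habs : abv (θ ^ q ^ (n+1) - θ) = T ^ q ^ (n+1) := by
      rw [show T ^ q ^ (n+1) = abv (θ ^ q ^ (n+1)) from (abv.map_pow _ _).symm]
      refine abv_sub_eq abv nonarch ?_
      rw [abv.map_pow]
      calc abv θ = T ^ 1 := (pow_one T).symm
        _ < T ^ q ^ (n+1) := by
          apply pow_lt_pow_right₀ hθ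
          exact Nat.one_lt_pow (by omega) hq
    have hsum : abv (∑ l ∈ Finset.Icc 1 d,
        if h : 1 ≤ l ∧ l ≤ n + 1 then c l * (eRec F q d θ c (n + 1 - l)) ^ q ^ l else 0)
        ≤ C * B := by
      refine abv_sum_le abv nonarch (by positivity) ?_
      intro l hl
      by_cases h : 1 ≤ l ∧ l ≤ n + 1
      · rw [dif_pos h, abv.map_mul, abv.map_pow]
        exact mul_le_mul (hCl l hl) (hw l hl) (by positivity) hC0
      · rw [dif_neg h]
        simpa using by positivity
    show abv (eRec F q d θ c (n+1)) ≤ _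
    rw [eRec, abv.map_mul, map_inv₀, habs]
    exact mul_le_mul_of_nonneg_left hsum (by positivity)
  -- pass to q^n-th roots
  set t : ℕ → ℝ := fun n => (a n) ^ ((((q : ℕ) ^ n : ℕ) : ℝ))⁻¹ with htdef
  have ht0 : ∀ n, 0 ≤ t n := fun n => Real.rpow_nonneg (ha0 n) _
  have hqn0 : ∀ n : ℕ, (q : ℕ) ^ n ≠ 0 := fun n => pow_ne_zero n (by omega)
  have hta : ∀ n, t n ^ (q ^ n) = a n := fun n =>
    Real.rpow_inv_natCast_pow (ha0 n) (hqn0 n)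
  have tstep : ∀ n : ℕ, d ≤ n → ∀ B : ℝ, 0 ≤ B →
      (∀ l ∈ Finset.Icc 1 d, t (n - l) ≤ B) →
      t n ≤ C ^ ((((q : ℕ) ^ n : ℕ) : ℝ))⁻¹ * T⁻¹ * B := by
    intro n hn B hB hw
    obtain ⟨m, rfl⟩ : ∃ m, n = m + 1 := ⟨n - 1, by omega⟩
    have key : a (m+1) ≤ (T ^ q ^ (m+1))⁻¹ * (C * B ^ (q ^ (m+1))) := by
      refine step m _ (by positivity) ?_
      intro l hl
      obtain ⟨hl1, hl2⟩ := Finset.mem_Icc.mp hl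
      rw [← hta (m+1-l), ← pow_mul]
      have he : q ^ (m+1-l) * q ^ l = q ^ (m+1) := by
        rw [← pow_add]; congr 1; omega
      rw [he]
      exact pow_le_pow_left₀ (ht0 _) (hw l hl) _
    have h2 := Real.rpow_le_rpow (ha0 (m+1)) key
      (by positivity : (0:ℝ) ≤ ((((q : ℕ) ^ (m+1) : ℕ) : ℝ))⁻¹)
    refine h2.trans (le_of_eq ?_)
    rw [Real.mul_rpow (by positivity) (by positivity),
        Real.mul_rpow hC0 (by positivity),
        Real.inv_rpow (by positivity),
        Real.pow_rpow_inv_natCast hT0.le (hqn0 _),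
        Real.pow_rpow_inv_natCast hB (hqn0 _)]
    ring
  -- the contraction factor
  set β : ℝ := (1 + T⁻¹) / 2 with hβdef
  have hβ0 : 0 < β := by positivity
  have hβ1 : β < 1 := by
    have : T⁻¹ < 1 := inv_lt_one_of_one_lt₀ hθ
    rw [hβdef]; linarith
  have hβT : 1 < β * T := by
    have hβT' : β * T = (T + 1) / 2 := by
      rw [hβdef]; field_simp
    rw [hβT']; linarith
  obtain ⟨N₁, hN₁⟩ : ∃ N₁ : ℕ, C < (β * T) ^ N₁ := pow_unbounded_of_one_lt C hβT
  set N : ℕ := max N₁ (d + 1) with hNdef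
  have hNd : d + 1 ≤ N := le_max_right _ _
  have hCβ : ∀ n : ℕ, N ≤ n → C ^ ((((q : ℕ) ^ n : ℕ) : ℝ))⁻¹ ≤ β * T := by
    intro n hn
    have hn' : N₁ ≤ q ^ n := by
      have h1 : n < q ^ n := Nat.lt_pow_self hq
      omega
    have h1 : C ≤ (β * T) ^ (q ^ n : ℕ) :=
      hN₁.le.trans (pow_le_pow_right₀ hβT.le hn')
    calc C ^ ((((q : ℕ) ^ n : ℕ) : ℝ))⁻¹
        ≤ ((β * T) ^ (q ^ n : ℕ)) ^ ((((q : ℕ) ^ n : ℕ) : ℝ))⁻¹ :=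
          Real.rpow_le_rpow hC0 h1 (by positivity)
      _ = β * T := Real.pow_rpow_inv_natCast (by positivity) (hqn0 n)
  have tstep' : ∀ n : ℕ, N ≤ n → ∀ B : ℝ, 0 ≤ B →
      (∀ l ∈ Finset.Icc 1 d, t (n - l) ≤ B) → t n ≤ β * B := by
    intro n hn B hB hw
    have h1 := tstep n (by omega) B hB hw
    have h2 : C ^ ((((q : ℕ) ^ n : ℕ) : ℝ))⁻¹ * T⁻¹ * B ≤ (β * T) * T⁻¹ * B := by
      have := hCβ n hn
      gcongr
    have h3 : (β * T) * T⁻¹ * B = β * B := by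
      field_simp
    linarith
  -- uniform bound M₀ on all t j
  have hNpos : 0 < N := by omega
  have hneN : (Finset.range N).Nonempty := ⟨0, Finset.mem_range.mpr hNpos⟩
  set M₀ : ℝ := (Finset.range N).sup' hneN t with hM₀def
  have hM : ∀ j, j < N → t j ≤ M₀ := fun j hj =>
    Finset.le_sup' t (Finset.mem_range.mpr hj)
  have hM0 : 0 ≤ M₀ := (ht0 0).trans (hM 0 hNpos)
  have W0 : ∀ j, t j ≤ M₀ := by
    intro j
    induction j using Nat.strong_induction_on with
    | _ j ih =>
      by_cases hj : j < N
      · exact hM j hj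
      · push_neg at hj
        have h1 : t j ≤ β * M₀ := by
          refine tstep' j hj M₀ hM0 ?_
          intro l hl
          obtain ⟨hl1, hl2⟩ := Finset.mem_Icc.mp hl
          exact ih (j - l) (by omega)
        nlinarith
  have W : ∀ k : ℕ, ∀ j, N + k * d ≤ j → t j ≤ β ^ k * M₀ := by
    intro k
    induction k with
    | zero => intro j _; simpa using W0 j
    | succ k ih =>
      intro j hj
      have h1 : t j ≤ β * (β ^ k * M₀) := by
        have hsm : (k + 1) * d = k * d + d := by ring
        refine tstep' j (by omega) _ (by positivity) ?_
        intro l hl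
        obtain ⟨hl1, hl2⟩ := Finset.mem_Icc.mp hl
        refine ih (j - l) ?_
        have hsm : (k + 1) * d = k * d + d := by ring
        omega
      calc t j ≤ β * (β ^ k * M₀) := h1
        _ = β ^ (k + 1) * M₀ := by ring
  -- choose m with M₀ ≤ β⁻¹ ^ m
  obtain ⟨m, hm⟩ : ∃ m : ℕ, M₀ < (β⁻¹) ^ m :=
    pow_unbounded_of_one_lt M₀ (one_lt_inv_iff₀.mpr ⟨hβ0, hβ1⟩)
  set r : ℝ := β ^ ((((2 * d : ℕ) : ℝ))⁻¹) with hrdef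
  have hr0 : 0 < r := Real.rpow_pos_of_pos hβ0 _
  have hr1 : r < 1 := Real.rpow_lt_one hβ0.le hβ1 (by positivity)
  refine ⟨2 * N + 2 * d + 2 * d * m, r, hr0, hr1, ?_⟩
  intro n hn
  set k : ℕ := (n - N) / d with hkdef
  have hdk : d * k + (n - N) % d = n - N := Nat.div_add_mod (n - N) d
  have hmod : (n - N) % d < d := Nat.mod_lt _ (by omega)
  have hdm2 : 2 * d * m = 2 * (d * m) := by ring
  have hNn : N ≤ n := by omega
  have hkn : N + k * d ≤ n := by
    have h1 : k * d = d * k := by ring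
    omega
  have hkm : m ≤ k := by
    by_contra hc
    push_neg at hc
    have h1 : d * (k + 1) ≤ d * m := Nat.mul_le_mul_left d hc
    have h2 : d * (k + 1) = d * k + d := by ring
    omega
  have h2dk : n ≤ 2 * d * (k - m) := by
    have h2 : d * k = d * (k - m) + d * m := by
      rw [← Nat.mul_add]
      congr 1
      omega
    have h3 : 2 * d * (k - m) = 2 * (d * (k - m)) := by ring
    omega
  -- t n ≤ β ^ (k - m)
  have h3 : t n ≤ β ^ (k - m) := by
    have h4 : t n ≤ β ^ k * M₀ := W k n hkn
    have h5 : β ^ k * M₀ ≤ β ^ k * (β⁻¹) ^ m := by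
      have h6 := pow_pos hβ0 k
      nlinarith
    have h6 : β ^ k * (β⁻¹) ^ m = β ^ (k - m) := by
      rw [inv_pow, pow_sub₀ β hβ0.ne' hkm]
    linarith
  -- β ^ (k - m) ≤ r ^ n
  have hpos : (0:ℝ) < ((2 * d : ℕ) : ℝ) := by positivity
  have hrn : r ^ n = β ^ (((((2 * d : ℕ) : ℝ))⁻¹) * (n : ℝ)) := by
    rw [hrdef, ← Real.rpow_natCast (β ^ ((((2 * d : ℕ) : ℝ))⁻¹)) n,
      ← Real.rpow_mul hβ0.le]
  have hcast : (n : ℝ) ≤ ((2 * d : ℕ) : ℝ) * ((k - m : ℕ) : ℝ) := by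
    exact_mod_cast h2dk
  have hexp : ((((2 * d : ℕ) : ℝ))⁻¹) * (n : ℝ) ≤ ((k - m : ℕ) : ℝ) := by
    have h9 : ((((2 * d : ℕ) : ℝ))⁻¹) * (n : ℝ)
        ≤ ((((2 * d : ℕ) : ℝ))⁻¹) * (((2 * d : ℕ) : ℝ) * ((k - m : ℕ) : ℝ)) :=
      mul_le_mul_of_nonneg_left hcast (by positivity)
    have h10 : ((((2 * d : ℕ) : ℝ))⁻¹) * (((2 * d : ℕ) : ℝ) * ((k - m : ℕ) : ℝ))
        = ((k - m : ℕ) : ℝ) := by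
      field_simp
    linarith
  have h7 : β ^ (k - m) ≤ r ^ n := by
    rw [hrn, ← Real.rpow_natCast β (k - m)]
    exact Real.rpow_le_rpow_of_exponent_ge hβ0 hβ1.le hexp
  have h8 : t n ≤ r ^ n := h3.trans h7
  calc abv (eRec F q d θ c n) = t n ^ q ^ n := (hta n).symm
    _ ≤ (r ^ n) ^ q ^ n := pow_le_pow_left₀ (ht0 n) h8 _
    _ = r ^ (n * q ^ n) := by rw [← pow_mul]

end
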